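/- Let k ≥ 1 and ℓ ≥ 0 be integers and let V be a finite set. If a configuration (E, t, peb) of the (k,ℓ)-pebble game on V is reachable from the initial configuration, then the hypergraph H = (V,E) is (k,ℓ)-sparse; if moreover Σ_{v∈V} peb(v) = ℓ, then H is (k,ℓ)-tight. -/
import Mathlib


/-- The number of edges of the multiset `E` spanned by the vertex set `W`. -/
def spanCount {V : Type*} [DecidableEq V] (E : Multiset (Finset V)) (W : Finset V) : ℕ :=
  (E.filter fun e => e ⊆ W).card

/-- A hypergraph with edge multiset `E` is `(k,ℓ)`-sparse if every vertex subset spanning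
at least one edge spans at most `k|W| - ℓ` edges. -/
def Sparse {V : Type*} [DecidableEq V] (k l : ℕ) (E : Multiset (Finset V)) : Prop :=
  ∀ W : Finset V, 1 ≤ spanCount E W → spanCount E W + l ≤ k * W.card

/-- A hypergraph on the finite vertex type `V` is `(k,ℓ)`-tight if it is `(k,ℓ)`-sparse
and has exactly `k|V| - ℓ` edges. -/
def Tight {V : Type*} [Fintype V] [DecidableEq V] (k l : ℕ) (E : Multiset (Finset V)) : Prop :=
  Sparse k l E ∧ Multiset.card E + l = k * Fintype.card V

/-- Reachable configurations of the `(k,ℓ)`-pebble game on the vertex type `V`.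
A configuration is a multiset `D` of oriented edges (an edge together with its tail)
and a pebble function `peb`.  The initial configuration has no edges and `k` pebbles on
each vertex.  The moves are the add-edge move (an edge with at least `ℓ+1` pebbles on its
ends may be added, picking up a pebble from its chosen tail) and the pebble-shift move
(a pebble on an end `v` of an edge with tail `w` may be moved to `w`, making `v` the new
tail). -/
inductive PebbleReach {V : Type*} [DecidableEq V] (k l : ℕ) :
    Multiset (Finset V × V) → (V → ℕ) → Prop
  | init : PebbleReach k l 0 (fun _ => k)
  | addEdge {D : Multiset (Finset V × V)} {peb : V → ℕ} (e : Finset V) (v : V) :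
      PebbleReach k l D peb → e.Nonempty → v ∈ e →
      l + 1 ≤ ∑ u ∈ e, peb u → 1 ≤ peb v →
      PebbleReach k l ((e, v) ::ₘ D) (Function.update peb v (peb v - 1))
  | shift {D : Multiset (Finset V × V)} {peb : V → ℕ} (e : Finset V) (w v : V) :
      PebbleReach k l D peb → (e, w) ∈ D → v ∈ e → 1 ≤ peb v →
      PebbleReach k l ((e, v) ::ₘ D.erase (e, w))
        (Function.update (Function.update peb v (peb v - 1)) w
          (Function.update peb v (peb v - 1) w + 1))

lemma countP_mono' {α : Type*} (p q : α → Prop) [DecidablePred p] [DecidablePred q]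
    (s : Multiset α) (h : ∀ a ∈ s, p a → q a) : s.countP p ≤ s.countP q := by
  induction s using Multiset.induction with
  | empty => simp
  | cons a s ih =>
    simp only [Multiset.countP_cons]
    gcongr
    · exact ih fun a ha => h a (Multiset.mem_cons_of_mem ha)
    · split_ifs with h1 h2
      · omega
      · exact absurd (h a (Multiset.mem_cons_self a s) h1) h2
      all_goals omega

lemma sum_countP_eq {α V : Type*} [DecidableEq V] (s : Multiset α) (f : α → V) (W : Finset V) :
    ∑ v ∈ W, s.countP (fun a => f a = v) = s.countP (fun a => f a ∈ W) := by
  induction s using Multiset.induction with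
  | empty => simp
  | cons a s ih =>
    simp only [Multiset.countP_cons, Finset.sum_add_distrib, ih]
    congr 1
    simp [Finset.sum_ite_eq' W (f a)]

lemma spanCount_cons {V : Type*} [DecidableEq V] (e : Finset V) (E : Multiset (Finset V))
    (W : Finset V) : spanCount (e ::ₘ E) W = spanCount E W + if e ⊆ W then 1 else 0 := by
  simp only [spanCount, Multiset.filter_cons]
  split_ifs <;> simp [add_comm]

lemma span_peb {V : Type*} [DecidableEq V] {k : ℕ} (D : Multiset (Finset V × V)) (peb : V → ℕ)
    (h2 : ∀ p ∈ D, p.2 ∈ p.1) (h1 : ∀ v, peb v + D.countP (fun p => p.2 = v) = k)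
    (W : Finset V) : spanCount (D.map Prod.fst) W + ∑ v ∈ W, peb v ≤ k * W.card := by
  have e1 : spanCount (D.map Prod.fst) W = D.countP (fun p => p.1 ⊆ W) := by
    rw [spanCount, ← Multiset.countP_eq_card_filter, Multiset.countP_map,
      ← Multiset.countP_eq_card_filter]
  have e2 : D.countP (fun p => p.1 ⊆ W) ≤ D.countP (fun p => p.2 ∈ W) :=
    countP_mono' _ _ _ fun p hp hsub => hsub (h2 p hp)
  have e3 := sum_countP_eq D Prod.snd W
  have e4 : ∑ v ∈ W, (peb v + D.countP (fun p => p.2 = v)) = k * W.card := by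
    rw [Finset.sum_congr rfl fun v _ => h1 v, Finset.sum_const, smul_eq_mul, mul_comm]
  rw [Finset.sum_add_distrib] at e4
  omega

lemma pebble_inv {V : Type*} [DecidableEq V] {k l : ℕ} {D : Multiset (Finset V × V)}
    {peb : V → ℕ} (h : PebbleReach k l D peb) :
    (∀ p ∈ D, p.2 ∈ p.1) ∧ (∀ v, peb v + D.countP (fun p => p.2 = v) = k) ∧
      Sparse k l (D.map Prod.fst) := by
  induction h with
  | init => refine ⟨by simp, by simp, ?_⟩; intro W hW; simp [spanCount] at hW
  | @addEdge D peb e v h he hv hsum hp ih =>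
    obtain ⟨i2, i1, isp⟩ := ih
    refine ⟨?_, ?_, ?_⟩
    · intro p hp'
      rcases Multiset.mem_cons.1 hp' with h' | h'
      · subst h'; exact hv
      · exact i2 p h'
    · intro u
      have h1u := i1 u
      rw [Multiset.countP_cons]
      simp only [Function.update_apply]
      by_cases huv : u = v
      · subst huv; simp at h1u ⊢; omega
      · simp [huv, Ne.symm huv] at h1u ⊢; omega
    · intro W hW
      rw [Multiset.map_cons, spanCount_cons] at hW ⊢
      by_cases hsub : e ⊆ W
      · have hkW := span_peb D peb i2 i1 W
        have hpe : l + 1 ≤ ∑ u ∈ W, peb u :=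
          le_trans hsum (Finset.sum_le_sum_of_subset hsub)
        simp only [hsub, if_true]
        omega
      · simp only [hsub, if_false] at hW ⊢
        simpa using isp W (by omega)
  | @shift D peb e w v h hmem hv hp ih =>
    obtain ⟨i2, i1, isp⟩ := ih
    have hD : ((e, v) ::ₘ D.erase (e, w)).map Prod.fst = D.map Prod.fst := by
      conv_rhs => rw [← Multiset.cons_erase hmem]
      simp
    refine ⟨?_, ?_, ?_⟩
    · intro p hp'
      rcases Multiset.mem_cons.1 hp' with h' | h'
      · subst h'; exact hv
      · exact i2 p (Multiset.mem_of_mem_erase h')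
    · intro u
      have h1u := i1 u
      rw [show D = (e, w) ::ₘ D.erase (e, w) from (Multiset.cons_erase hmem).symm,
        Multiset.countP_cons] at h1u
      rw [Multiset.countP_cons]
      simp only [Function.update_apply]
      by_cases huv : u = v
      · subst huv
        by_cases huw : u = w
        · subst huw; simp at h1u ⊢; omega
        · simp [huw, Ne.symm huw] at h1u ⊢; omega
      · by_cases huw : u = w
        · subst huw; simp [huv, Ne.symm huv] at h1u ⊢; omega
        · simp [huv, huw, Ne.symm huv, Ne.symm huw] at h1u ⊢; omega
    · rw [hD]; exact isp

theorem stmt_15 {V : Type*} [Fintype V] [DecidableEq V] (k l : ℕ) (hk : 1 ≤ k)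
    (D : Multiset (Finset V × V)) (peb : V → ℕ) (h : PebbleReach k l D peb) :
    Sparse k l (D.map Prod.fst) ∧
      ((∑ v, peb v) = l → Tight k l (D.map Prod.fst)) := by
  obtain ⟨i2, i1, isp⟩ := pebble_inv h
  refine ⟨isp, fun hl => ⟨isp, ?_⟩⟩
  have e3 := sum_countP_eq D Prod.snd Finset.univ
  simp only [Finset.mem_univ, Multiset.countP_True] at e3
  have h4 : ∑ v, (peb v + D.countP (fun p => p.2 = v)) = k * Fintype.card V := by
    rw [Finset.sum_congr rfl fun v _ => i1 v, Finset.sum_const, Finset.card_univ,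
      smul_eq_mul, mul_comm]
  rw [Finset.sum_add_distrib] at h4
  rw [Multiset.card_map]
  omega
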